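/- For every M > 0 there exists ρ = ρ(M) ∈ (0,1) such that: if f : 𝔻 → 𝔻 is analytic and sup{(1−|z|²)|f′(z)|/(1−|f(z)|²) : z ∈ 𝔻} ≥ ρ, then the image f(𝔻) contains a hyperbolic disc of hyperbolic radius M. -/

import Mathlib

open MeasureTheory Complex Set Metric Filter
open scoped ENNReal NNReal Topology

noncomputable section

/-- The hyperbolic derivative of an analytic self-map of the unit disc. -/
def hypDeriv (f : ℂ → ℂ) (z : ℂ) : ℝ :=
  (1 - ‖z‖ ^ 2) * ‖deriv f z‖ / (1 - ‖f z‖ ^ 2)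

/-- A self-map of the disc is contractive if its hyperbolic derivative is
uniformly bounded by a constant smaller than one. -/
def ContractiveMap (f : ℂ → ℂ) : Prop :=
  ∃ D < (1 : ℝ), ∀ z ∈ ball (0 : ℂ) 1, hypDeriv f z ≤ D

/-- The closed arc of the unit circle with center `ξ` and normalized length `t`
(arclength `2 π t`). -/
def bdryArc (ξ : ℂ) (t : ℝ) : Set ℂ :=
  {η : ℂ | ∃ θ : ℝ, |θ| ≤ Real.pi * t ∧ η = Complex.exp (θ * Complex.I) * ξ}

/-- The Carleson box over the arc with center `ξ` and normalized length `t`. -/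
def carlesonBox (ξ : ℂ) (t : ℝ) : Set ℂ :=
  {z : ℂ | z ∈ ball (0 : ℂ) 1 ∧ 1 - ‖z‖ ≤ t ∧ z ≠ 0 ∧ (‖z‖ : ℂ)⁻¹ * z ∈ bdryArc ξ t}

/-- Normalized arclength measure on the unit circle (total mass 1). -/
def circleM : Measure ℂ :=
  Measure.map (fun θ : ℝ => Complex.exp (2 * Real.pi * θ * Complex.I))
    (volume.restrict (Ioc (0 : ℝ) 1))

/-- Normalized area measure on the unit disc (total mass 1). -/
def discM : Measure ℂ :=
  (ENNReal.ofReal Real.pi)⁻¹ • volume.restrict (ball (0 : ℂ) 1)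

/-- Poisson integral of a measure on the unit circle. -/
def poissonInt (σ : Measure ℂ) (z : ℂ) : ℝ :=
  ∫ ξ, (1 - ‖z‖ ^ 2) / ‖ξ - z‖ ^ 2 ∂σ

/-- Hyperbolic distance on the unit disc. -/
def hypDist (z w : ℂ) : ℝ :=
  (1 / 2) * Real.log ((1 + ‖(z - w) / (1 - (starRingEnd ℂ) w * z)‖) /
    (1 - ‖(z - w) / (1 - (starRingEnd ℂ) w * z)‖))

/-- `u` is harmonic on the unit disc: twice continuously differentiable with
vanishing Laplacian. -/
def HarmonicOnDisc (u : ℂ → ℝ) : Prop :=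
  ContDiffOn ℝ 2 u (ball (0 : ℂ) 1) ∧
    ∀ z ∈ ball (0 : ℂ) 1,
      fderiv ℝ (fun w => fderiv ℝ u w 1) z 1 +
        fderiv ℝ (fun w => fderiv ℝ u w Complex.I) z Complex.I = 0

/-- An inner function: a bounded analytic self-map of the disc whose radial limits
have modulus one almost everywhere on the circle. -/
def InnerFunction (f : ℂ → ℂ) : Prop :=
  DifferentiableOn ℂ f (ball (0 : ℂ) 1) ∧
    (∀ z ∈ ball (0 : ℂ) 1, f z ∈ ball (0 : ℂ) 1) ∧
    ∀ᵐ ξ ∂circleM, ∃ L : ℂ, ‖L‖ = 1 ∧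
      Tendsto (fun r : ℝ => f ((r : ℂ) * ξ)) (nhdsWithin 1 (Iio 1)) (nhds L)

/-- The set of boundary points whose radial limit under `f` exists and lies in `E`. -/
def radialPreimage (f : ℂ → ℂ) (E : Set ℂ) : Set ℂ :=
  {ξ : ℂ | ‖ξ‖ = 1 ∧ ∃ L ∈ E,
    Tendsto (fun r : ℝ => f ((r : ℂ) * ξ)) (nhdsWithin 1 (Iio 1)) (nhds L)}

/-- Harmonic measure of `E ⊆ ∂𝔻` from the point `z ∈ 𝔻`. -/
def harmonicMeas (z : ℂ) (E : Set ℂ) : ℝ :=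
  ∫ ξ in E, (1 - ‖z‖ ^ 2) / ‖ξ - z‖ ^ 2 ∂circleM

/-- Poisson integral of a positive measure on the closed unit disc. -/
def poissonMu (μ : Measure ℂ) (z : ℂ) : ℝ≥0∞ :=
  ∫⁻ w, ENNReal.ofReal ((1 - ‖z‖ ^ 2) / ‖1 - (starRingEnd ℂ) w * z‖ ^ 2) ∂μ

/-- The measure `Σ_{f(w)=0} m_w (1-|w|²) δ_w` over the zeros of `f` in the disc,
with multiplicities given by `ord`. -/
def zeroMassMeasure (f : ℂ → ℂ) (ord : ℂ → ℕ) : Measure ℂ :=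
  Measure.sum (fun w : {w : ℂ // w ∈ ball (0 : ℂ) 1 ∧ f w = 0} =>
    ((ord (w : ℂ) : ℝ≥0∞) * ENNReal.ofReal (1 - ‖(w : ℂ)‖ ^ 2)) • Measure.dirac (w : ℂ))

/-- The dyadic subarc of generation `p.1` and index `p.2` of the (half-open) arc
with center `ξ` and normalized length `t`, obtained by repeated bisection. -/
def dyadicArc (ξ : ℂ) (t : ℝ) (p : ℕ × ℕ) : Set ℂ :=
  {η : ℂ | ∃ θ : ℝ,
    -(Real.pi * t) + 2 * Real.pi * t * p.2 / 2 ^ p.1 ≤ θ ∧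
    θ < -(Real.pi * t) + 2 * Real.pi * t * (p.2 + 1) / 2 ^ p.1 ∧
    η = Complex.exp (θ * Complex.I) * ξ}


set_option maxHeartbeats 1000000
section AuxHelpers
/-- Möbius map of the disc. -/
def mob (a z : ℂ) : ℂ := (z - a) / (1 - (starRingEnd ℂ) a * z)

lemma normSq_identity (a z : ℂ) :
    normSq (1 - (starRingEnd ℂ) a * z) - normSq (z - a)
      = (1 - normSq a) * (1 - normSq z) := by
  simp only [normSq_apply, Complex.sub_re, Complex.sub_im, Complex.mul_re, Complex.mul_im,
    Complex.one_re, Complex.one_im, Complex.conj_re, Complex.conj_im]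
  ring

lemma den_ne {a z : ℂ} (ha : ‖a‖ < 1) (hz : ‖z‖ < 1) :
    (1 : ℂ) - (starRingEnd ℂ) a * z ≠ 0 := by
  intro h
  have h1 : (1 : ℂ) = (starRingEnd ℂ) a * z := by linear_combination h
  have : ‖(starRingEnd ℂ) a * z‖ < 1 := by
    rw [norm_mul, RCLike.norm_conj]
    nlinarith [norm_nonneg a, norm_nonneg z]
  rw [← h1] at this; simp at this

lemma normSq_lt_one {z : ℂ} (hz : ‖z‖ < 1) : normSq z < 1 := by
  have := Complex.sq_norm z
  nlinarith [norm_nonneg z]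

lemma mob_mem {a z : ℂ} (ha : ‖a‖ < 1) (hz : ‖z‖ < 1) : ‖mob a z‖ < 1 := by
  have h1 : normSq (z - a) < normSq (1 - (starRingEnd ℂ) a * z) := by
    have := normSq_identity a z
    nlinarith [normSq_lt_one ha, normSq_lt_one hz]
  have hd := den_ne ha hz
  rw [mob, norm_div, div_lt_one (norm_pos_iff.mpr hd)]
  have e1 : ‖z - a‖ ^ 2 = normSq (z - a) := by
    rw [← Complex.sq_norm]
  have e2 : ‖1 - (starRingEnd ℂ) a * z‖ ^ 2 = normSq (1 - (starRingEnd ℂ) a * z) := by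
    rw [← Complex.sq_norm]
  nlinarith [norm_nonneg (z - a), norm_nonneg (1 - (starRingEnd ℂ) a * z)]

lemma one_sub_conj_mul_self_ne {a : ℂ} (ha : ‖a‖ < 1) :
    (1 : ℂ) - (starRingEnd ℂ) a * a ≠ 0 := den_ne ha ha

lemma mob_inv {a z : ℂ} (ha : ‖a‖ < 1) (hz : ‖z‖ < 1) : mob (-a) (mob a z) = z := by
  have h1 := den_ne ha hz
  have h2 := one_sub_conj_mul_self_ne ha
  have h2' : (1 : ℂ) - a * (starRingEnd ℂ) a ≠ 0 := by
    rw [mul_comm] at h2; exact h2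
  rw [mob, mob]
  rw [map_neg]
  have e1 : (z - a) / (1 - (starRingEnd ℂ) a * z) - -a
      = z * (1 - (starRingEnd ℂ) a * a) / (1 - (starRingEnd ℂ) a * z) := by
    rw [eq_div_iff h1, sub_mul, div_mul_cancel₀ _ h1]; ring
  have e2 : 1 - -(starRingEnd ℂ) a * ((z - a) / (1 - (starRingEnd ℂ) a * z))
      = (1 - (starRingEnd ℂ) a * a) / (1 - (starRingEnd ℂ) a * z) := by
    rw [eq_div_iff h1, sub_mul, mul_assoc, div_mul_cancel₀ _ h1]; ring
  rw [e1, e2, div_div_div_cancel_right₀ h1, mul_div_assoc, div_self h2, mul_one]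

lemma mob_hasDerivAt (a z : ℂ) (hden : (1 : ℂ) - (starRingEnd ℂ) a * z ≠ 0) :
    HasDerivAt (mob a) ((1 - (starRingEnd ℂ) a * a) / (1 - (starRingEnd ℂ) a * z) ^ 2) z := by
  have hu : HasDerivAt (fun w : ℂ => w - a) 1 z := (hasDerivAt_id z).sub_const a
  have hv : HasDerivAt (fun w : ℂ => 1 - (starRingEnd ℂ) a * w) (-((starRingEnd ℂ) a)) z := by
    simpa using ((hasDerivAt_id z).const_mul ((starRingEnd ℂ) a)).const_sub 1
  have := hu.div hv hden
  exact this.congr_deriv (by ring)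

lemma mob_diffOn {a : ℂ} (ha : ‖a‖ < 1) : DifferentiableOn ℂ (mob a) (ball (0:ℂ) 1) := by
  intro z hz
  simp only [mem_ball, dist_zero_right] at hz
  exact ((mob_hasDerivAt a z (den_ne ha hz)).differentiableAt).differentiableWithinAt

lemma lem_primitive (q : ℂ → ℂ) (hq : DifferentiableOn ℂ q (closedBall (0:ℂ) 1)) :
    ∃ F : ℂ → ℂ, ∀ z ∈ ball (0:ℂ) 1, HasDerivAt F (q z) z := by
  have hq1 : DifferentiableOn ℂ q (closedBall (0:ℂ) ((1:ℝ≥0) : ℝ)) := by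
    simpa using hq
  have hp : HasFPowerSeriesOnBall q (cauchyPowerSeries q 0 ((1:ℝ≥0) : ℝ)) 0 ((1:ℝ≥0) : ℝ≥0∞) :=
    hq1.hasFPowerSeriesOnBall (by norm_num)
  set p := cauchyPowerSeries q 0 ((1:ℝ≥0) : ℝ) with hpdef
  set a : ℕ → ℂ := fun n => p.coeff n with hadef
  refine ⟨fun z => ∑' n, (a n / (n + 1)) * z ^ (n + 1), ?_⟩
  intro z hz
  simp only [mem_ball, dist_zero_right] at hz
  set r : ℝ := (‖z‖ + 1) / 2 with hrdef
  have hr0 : 0 ≤ r := by positivity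
  have hzr : ‖z‖ < r := by rw [hrdef]; linarith
  have hr1 : r < 1 := by rw [hrdef]; linarith
  have hrad : ((r.toNNReal : ℝ≥0) : ℝ≥0∞) < p.radius := by
    refine lt_of_lt_of_le ?_ hp.r_le
    rw [show ((1:ℝ≥0) : ℝ≥0∞) = ((1 : ℝ≥0) : ℝ≥0∞) from rfl, ENNReal.coe_lt_coe,
      ← NNReal.coe_lt_coe, Real.coe_toNNReal r hr0]
    simpa using hr1
  have hsum : Summable fun n => ‖p n‖ * r ^ n := by
    have := p.summable_norm_mul_pow hrad
    simpa [Real.coe_toNNReal r hr0] using this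
  have key : HasDerivAt (fun y => ∑' n, (a n / (n + 1)) * y ^ (n + 1))
      (∑' n, a n * z ^ n) z := by
    refine hasDerivAt_tsum_of_isPreconnected (u := fun n => ‖a n‖ * r ^ n)
      (g' := fun n y => a n * y ^ n) (y₀ := 0)
      ?_ (isOpen_ball (x := (0:ℂ)) (ε := r)) (convex_ball (0:ℂ) r).isPreconnected
      ?_ ?_ ?_ ?_ ?_
    · simpa only [hadef, ← p.norm_apply_eq_norm_coef] using hsum
    · intro n y _
      have h1 : HasDerivAt (fun y : ℂ => y ^ (n + 1)) ((n + 1) * y ^ n) y := by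
        simpa using hasDerivAt_pow (n + 1) y
      have h2 := h1.const_mul (a n / (n + 1))
      have hne : ((n : ℂ) + 1) ≠ 0 := Nat.cast_add_one_ne_zero n
      have hne' : (1 + (n : ℂ)) ≠ 0 := by rw [add_comm]; exact hne
      exact h2.congr_deriv (by rw [← mul_assoc, div_mul_cancel₀ _ hne])
    · intro n y hy
      simp only [mem_ball, dist_zero_right] at hy
      rw [norm_mul, norm_pow]
      have : ‖y‖ ^ n ≤ r ^ n := pow_le_pow_left₀ (norm_nonneg y) hy.le n
      exact mul_le_mul_of_nonneg_left this (norm_nonneg _)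
    · simp only [mem_ball, dist_self]; rw [hrdef]; positivity
    · have : (fun n : ℕ => (a n / (n + 1)) * (0:ℂ) ^ (n + 1)) = fun _ => (0:ℂ) := by
        ext n; simp [pow_succ]
      rw [this]
      exact summable_zero
    · simp only [mem_ball, dist_zero_right]; exact hzr
  have hval : (∑' n, a n * z ^ n) = q z := by
    have hs : HasSum (fun n => p n fun _ => z) (q (0 + z)) := by
      apply hp.hasSum
      rw [EMetric.mem_ball, edist_zero_right]
      exact_mod_cast hz
    simp only [p.apply_eq_pow_smul_coeff, smul_eq_mul, zero_add] at hs
    rw [← hs.tsum_eq]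
    congr 1; ext n; rw [mul_comm]
  rw [hval] at key
  exact key

lemma lem4core (h q : ℂ → ℂ)
    (hd : ∀ z ∈ ball (0:ℂ) 1, HasDerivAt h (q z * h z) z)
    (hq : DifferentiableOn ℂ q (closedBall (0:ℂ) 1))
    (h0 : h 0 ≠ 0)
    (hb : ∀ z ∈ ball (0:ℂ) 1, ‖h z‖ < 1) :
    ‖q 0‖ ≤ 2 * (- Real.log ‖h 0‖) := by
  obtain ⟨F, hF⟩ := lem_primitive q hq
  set c : ℂ := Complex.log (h 0) with hcdef
  set G : ℂ → ℂ := fun z => F z - F 0 + c with hGdef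
  have hG : ∀ z ∈ ball (0:ℂ) 1, HasDerivAt G (q z) z := by
    intro z hz
    exact ((hF z hz).sub_const (F 0)).add_const c
  have h0ball : (0:ℂ) ∈ ball (0:ℂ) 1 := by simp
  -- h = exp ∘ G on the ball
  have hexp : ∀ z ∈ ball (0:ℂ) 1, h z = Complex.exp (G z) := by
    have hphi : ∀ z ∈ ball (0:ℂ) 1,
        HasFDerivWithinAt (fun z => h z * Complex.exp (-(F z)))
          (0 : ℂ →L[ℂ] ℂ) (ball (0:ℂ) 1) z := by
      intro z hz
      have h1 : HasDerivAt (fun z => Complex.exp (-(F z)))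
          (Complex.exp (-(F z)) * (-(q z))) z := ((hF z hz).neg).cexp
      have h2 := (hd z hz).mul h1
      have h3 : q z * h z * Complex.exp (-(F z)) +
          h z * (Complex.exp (-(F z)) * (-(q z))) = 0 := by ring
      rw [h3] at h2
      have := h2.hasFDerivAt
      have e0 : ContinuousLinearMap.toSpanSingleton ℂ (0:ℂ) = 0 := by
        ext x; simp
      rw [e0] at this
      exact this.hasFDerivWithinAt
    have hconst : ∀ z ∈ ball (0:ℂ) 1,
        h z * Complex.exp (-(F z)) = h 0 * Complex.exp (-(F 0)) := by
      intro z hz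
      have := (convex_ball (0:ℂ) 1).norm_image_sub_le_of_norm_hasFDerivWithin_le
        (C := 0) hphi (fun x _ => by simp) h0ball hz
      have h4 : ‖h z * Complex.exp (-(F z)) - h 0 * Complex.exp (-(F 0))‖ ≤ 0 := by
        simpa using this
      have h5 := le_antisymm h4 (norm_nonneg _)
      rw [norm_eq_zero, sub_eq_zero] at h5
      exact h5
    intro z hz
    have hc := hconst z hz
    have hene : Complex.exp (-(F z)) ≠ 0 := Complex.exp_ne_zero _
    have : h z = h 0 * Complex.exp (-(F 0)) * Complex.exp (F z) := by
      field_simp at hc ⊢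
      rw [← hc]
      rw [mul_assoc, ← Complex.exp_add]
      simp
    rw [this, hGdef]
    show h 0 * Complex.exp (-F 0) * Complex.exp (F z) = Complex.exp (F z - F 0 + c)
    rw [show F z - F 0 + c = c + -F 0 + F z by ring, Complex.exp_add, Complex.exp_add,
      hcdef, Complex.exp_log h0]
  have hRe : ∀ z ∈ ball (0:ℂ) 1, (G z).re < 0 := by
    intro z hz
    have : ‖h z‖ = Real.exp ((G z).re) := by
      rw [hexp z hz, Complex.norm_exp]
    have hb' := hb z hz
    rw [this, Real.exp_lt_one_iff] at hb'
    exact hb'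
  have hG0 : G 0 = c := by simp [hGdef]
  have hcre : c.re < 0 := by have := hRe 0 h0ball; rwa [hG0] at this
  -- the Cayley-type transform
  set T : ℂ → ℂ := fun ζ => (ζ - c) / (ζ + (starRingEnd ℂ) c) with hTdef
  have hden : ∀ ζ : ℂ, ζ.re < 0 → ζ + (starRingEnd ℂ) c ≠ 0 := by
    intro ζ hζ hzero
    have : (ζ + (starRingEnd ℂ) c).re = ζ.re + c.re := by simp
    rw [hzero] at this
    simp at this
    linarith
  have hmaps : ∀ ζ : ℂ, ζ.re < 0 → ‖T ζ‖ < 1 := by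
    intro ζ hζ
    have hd0 := hden ζ hζ
    rw [hTdef]
    simp only []
    rw [norm_div, div_lt_one (norm_pos_iff.mpr hd0)]
    have e1 : ‖ζ - c‖ ^ 2 = normSq (ζ - c) := by rw [← Complex.sq_norm]
    have e2 : ‖ζ + (starRingEnd ℂ) c‖ ^ 2 = normSq (ζ + (starRingEnd ℂ) c) := by
      rw [← Complex.sq_norm]
    have key : normSq (ζ + (starRingEnd ℂ) c) - normSq (ζ - c) = 4 * ζ.re * c.re := by
      simp only [normSq_apply, Complex.add_re, Complex.add_im, Complex.sub_re, Complex.sub_im,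
        Complex.conj_re, Complex.conj_im]
      ring
    nlinarith [norm_nonneg (ζ - c), norm_nonneg (ζ + (starRingEnd ℂ) c),
      mul_pos (neg_pos.mpr hζ) (neg_pos.mpr hcre)]
  set K : ℂ → ℂ := fun z => T (G z) with hKdef
  have hK0 : K 0 = 0 := by rw [hKdef]; simp [hG0, hTdef]
  have hKd : DifferentiableOn ℂ K (ball (0:ℂ) 1) := by
    intro z hz
    have hGz : DifferentiableWithinAt ℂ G (ball (0:ℂ) 1) z :=
      ((hG z hz).differentiableAt).differentiableWithinAt
    exact ((hGz.sub_const c).div (hGz.add_const ((starRingEnd ℂ) c))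
      (hden (G z) (hRe z hz)))
  have hKmaps : MapsTo K (ball (0:ℂ) 1) (ball (K 0) 1) := by
    intro z hz
    rw [hK0, mem_ball, dist_zero_right]
    exact hmaps (G z) (hRe z hz)
  have hschwarz := Complex.norm_deriv_le_div_of_mapsTo_ball hKd (hKmaps.mono_right ball_subset_closedBall) one_pos
  -- compute deriv K 0
  have hTder : HasDerivAt T ((c + (starRingEnd ℂ) c) / (c + (starRingEnd ℂ) c) ^ 2) c := by
    have hu : HasDerivAt (fun ζ : ℂ => ζ - c) 1 c := (hasDerivAt_id c).sub_const c
    have hv : HasDerivAt (fun ζ : ℂ => ζ + (starRingEnd ℂ) c) 1 c :=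
      (hasDerivAt_id c).add_const _
    have := hu.div hv (hden c hcre)
    exact this.congr_deriv (by simp)
  have hKder : HasDerivAt K (((c + (starRingEnd ℂ) c) / (c + (starRingEnd ℂ) c) ^ 2) * q 0) 0 := by
    have hg0 : HasDerivAt G (q 0) 0 := hG 0 h0ball
    rw [← hG0] at hTder
    have h6 := hTder.comp 0 hg0
    rw [hG0] at h6
    exact h6
  have hxne : c + (starRingEnd ℂ) c ≠ 0 := hden c hcre
  have hsimp : (c + (starRingEnd ℂ) c) / (c + (starRingEnd ℂ) c) ^ 2
      = (c + (starRingEnd ℂ) c)⁻¹ := by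
    rw [sq, div_mul_cancel_left₀ hxne]
  have hcre2 : (0:ℝ) < -(2 * c.re) := by linarith
  have hnorm : ‖deriv K 0‖ = ‖q 0‖ / (-(2 * c.re)) := by
    rw [hKder.deriv, hsimp, norm_mul, norm_inv, Complex.add_conj, Complex.norm_real,
      Real.norm_eq_abs, abs_of_neg (by linarith : 2 * c.re < 0)]
    rw [inv_mul_eq_div]
  rw [hnorm] at hschwarz
  rw [div_le_iff₀ hcre2] at hschwarz
  have hcre_eq : c.re = Real.log ‖h 0‖ := by
    rw [hcdef, Complex.log_re]
  rw [hcre_eq] at hschwarz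
  linarith

lemma lem4 (h : ℂ → ℂ) (hd : DifferentiableOn ℂ h (ball (0:ℂ) 1))
    (hb : ∀ z ∈ ball (0:ℂ) 1, ‖h z‖ < 1)
    (hne : ∀ z ∈ ball (0:ℂ) 1, h z ≠ 0) :
    ‖deriv h 0‖ ≤ 2 * ‖h 0‖ * (- Real.log ‖h 0‖) := by
  have h0ball : (0:ℂ) ∈ ball (0:ℂ) 1 := by simp
  have h0norm : 0 < ‖h 0‖ := norm_pos_iff.mpr (hne 0 h0ball)
  have hdd : DifferentiableOn ℂ (deriv h) (ball (0:ℂ) 1) :=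
    ((hd.analyticOnNhd isOpen_ball).deriv).differentiableOn
  -- scaled estimate
  have key : ∀ t : ℝ, 0 < t → t < 1 →
      t * ‖deriv h 0‖ / ‖h 0‖ ≤ 2 * (- Real.log ‖h 0‖) := by
    intro t ht0 ht1
    set ht : ℂ → ℂ := fun z => h ((t:ℂ) * z) with htdef
    set qt : ℂ → ℂ := fun z => (t:ℂ) * deriv h ((t:ℂ) * z) / h ((t:ℂ) * z) with hqtdef
    have hmem : ∀ z : ℂ, z ∈ closedBall (0:ℂ) 1 → (t:ℂ) * z ∈ ball (0:ℂ) 1 := by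
      intro z hz
      simp only [mem_closedBall, dist_zero_right] at hz
      simp only [mem_ball, dist_zero_right, norm_mul, Complex.norm_real]
      rw [Real.norm_eq_abs, abs_of_pos ht0]
      nlinarith [norm_nonneg z]
    have hmem' : ∀ z : ℂ, z ∈ ball (0:ℂ) 1 → (t:ℂ) * z ∈ ball (0:ℂ) 1 := fun z hz =>
      hmem z (ball_subset_closedBall hz)
    have hlin : DifferentiableOn ℂ (fun z : ℂ => (t:ℂ) * z) (closedBall (0:ℂ) 1) :=
      (differentiable_id.const_mul _).differentiableOn
    have hqt : DifferentiableOn ℂ qt (closedBall (0:ℂ) 1) := by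
      apply DifferentiableOn.div
      · exact ((hdd.comp hlin hmem).const_mul _)
      · exact hd.comp hlin hmem
      · intro z hz; exact hne _ (hmem z hz)
    have hder : ∀ z ∈ ball (0:ℂ) 1, HasDerivAt ht (qt z * ht z) z := by
      intro z hz
      have h1 : HasDerivAt h (deriv h ((t:ℂ) * z)) ((t:ℂ) * z) :=
        ((hd ((t:ℂ)*z) (hmem' z hz)).differentiableAt
          (isOpen_ball.mem_nhds (hmem' z hz))).hasDerivAt
      have h2 : HasDerivAt (fun z : ℂ => (t:ℂ) * z) (t:ℂ) z := by
        simpa using (hasDerivAt_id z).const_mul (t:ℂ)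
      have h3 := h1.comp z h2
      have he : qt z * ht z = deriv h ((t:ℂ) * z) * (t:ℂ) := by
        rw [hqtdef, htdef]
        field_simp [hne _ (hmem' z hz)]
      rw [← he] at h3
      exact h3
    have hcore := lem4core ht qt hder hqt (by
        simpa [htdef] using hne 0 h0ball)
      (by intro z hz; exact hb _ (hmem' z hz))
    have hq0 : ‖qt 0‖ = t * ‖deriv h 0‖ / ‖h 0‖ := by
      rw [hqtdef]
      simp only [mul_zero]
      rw [norm_div, norm_mul, Complex.norm_real, Real.norm_eq_abs, abs_of_pos ht0]
    have hh0 : ht 0 = h 0 := by rw [htdef]; simp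
    rw [hq0, hh0] at hcore
    exact hcore
  -- pass to the limit t → 1
  have key' : ∀ t : ℝ, 0 < t → t < 1 →
      t * ‖deriv h 0‖ ≤ 2 * (- Real.log ‖h 0‖) * ‖h 0‖ := by
    intro t a b
    have := key t a b
    rw [div_le_iff₀ h0norm] at this
    exact this
  by_contra hcon
  push_neg at hcon
  set A := ‖deriv h 0‖ with hA
  set B := 2 * ‖h 0‖ * (- Real.log ‖h 0‖) with hB
  have hBnonneg : 0 ≤ B := by
    have : Real.log ‖h 0‖ ≤ 0 := Real.log_nonpos (norm_nonneg _) (hb 0 h0ball).le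
    rw [hB]
    nlinarith
  have hApos : 0 < A := lt_of_le_of_lt hBnonneg hcon
  set t := (B + A) / (2 * A) with htdef2
  have ht0 : 0 < t := by positivity
  have ht1 : t < 1 := by rw [htdef2, div_lt_one (by positivity)]; linarith
  have := key' t ht0 ht1
  have hexp : t * A = (B + A) / 2 := by rw [htdef2]; field_simp
  have hBd : 2 * (-Real.log ‖h 0‖) * ‖h 0‖ = B := by rw [hB]; ring
  rw [hexp, hBd] at this
  linarith

lemma one_sub_conj_mul_self {a : ℂ} :
    (1 : ℂ) - (starRingEnd ℂ) a * a = ((1 - normSq a : ℝ) : ℂ) := by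
  rw [mul_comm, Complex.mul_conj]
  push_cast
  ring

lemma norm_sq_eq_normSq (z : ℂ) : ‖z‖ ^ 2 = normSq z := by
  rw [← Complex.sq_norm]

lemma psi_lt_one {s : ℝ} (h0 : 0 ≤ s) (h1 : s < 1) :
    2 * s * (-Real.log s) / (1 - s ^ 2) < 1 := by
  rcases eq_or_lt_of_le h0 with h | hs
  · simp [← h]
  · have hden : 0 < 1 - s ^ 2 := by nlinarith
    rw [div_lt_one hden]
    have ht : 0 < -Real.log s := by
      have := Real.log_neg hs h1; linarith
    have hsinh := Real.self_lt_sinh_iff.mpr ht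
    rw [Real.sinh_eq] at hsinh
    rw [neg_neg, Real.exp_log hs, Real.exp_neg, Real.exp_log hs] at hsinh
    have hinv : s * s⁻¹ = 1 := mul_inv_cancel₀ (ne_of_gt hs)
    nlinarith

lemma exists_C {r : ℝ} (hr0 : 0 < r) (hr1 : r < 1) :
    ∃ C : ℝ, 0 ≤ C ∧ C < 1 ∧
      ∀ s ∈ Icc (0:ℝ) r, 2 * s * (-Real.log s) / (1 - s ^ 2) ≤ C := by
  set ψ : ℝ → ℝ := fun s => 2 * s * (-Real.log s) / (1 - s ^ 2) with hψ
  have hcont : ContinuousOn ψ (Icc 0 r) := by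
    apply ContinuousOn.div
    · have : (fun s : ℝ => 2 * s * (-Real.log s)) = fun s => (-2) * (s * Real.log s) := by
        ext s; ring
      rw [this]
      exact (continuous_const.mul Real.continuous_mul_log).continuousOn
    · exact (continuous_const.sub (continuous_pow 2)).continuousOn
    · intro s hs
      simp only [mem_Icc] at hs
      nlinarith [hs.1, hs.2]
  obtain ⟨x, hx, hmax⟩ := isCompact_Icc.exists_isMaxOn (nonempty_Icc.mpr hr0.le) hcont
  refine ⟨ψ x, ?_, ?_, fun s hs => hmax hs⟩
  · have h0 : ψ 0 ≤ ψ x := hmax (left_mem_Icc.mpr hr0.le)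
    have : ψ 0 = 0 := by simp [hψ]
    linarith
  · exact psi_lt_one hx.1 (lt_of_le_of_lt hx.2 hr1)

lemma lem_cover {r C : ℝ} (hr1 : r < 1)
    (hC : ∀ s ∈ Icc (0:ℝ) r, 2 * s * (-Real.log s) / (1 - s ^ 2) ≤ C)
    (g : ℂ → ℂ) (hgd : DifferentiableOn ℂ g (ball (0:ℂ) 1))
    (hgm : ∀ z ∈ ball (0:ℂ) 1, ‖g z‖ < 1)
    (hg0 : g 0 = 0) (hgC : C < ‖deriv g 0‖) :
    ∀ w : ℂ, ‖w‖ < r → w ∈ g '' (ball (0:ℂ) 1) := by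
  intro w hwr
  by_contra hw
  have h0ball : (0:ℂ) ∈ ball (0:ℂ) 1 := by simp
  have hw0 : w ≠ 0 := by
    intro h
    exact hw ⟨0, h0ball, by rw [hg0, h]⟩
  have hw1 : ‖w‖ < 1 := lt_trans hwr hr1
  have hwpos : 0 < ‖w‖ := norm_pos_iff.mpr hw0
  set h : ℂ → ℂ := fun z => mob w (g z) with hhdef
  have hball : ∀ z ∈ ball (0:ℂ) 1, g z ∈ ball (0:ℂ) 1 := by
    intro z hz; simp only [mem_ball, dist_zero_right]; exact hgm z hz
  have hhd : DifferentiableOn ℂ h (ball (0:ℂ) 1) :=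
    (mob_diffOn hw1).comp hgd hball
  have hhm : ∀ z ∈ ball (0:ℂ) 1, ‖h z‖ < 1 := fun z hz => mob_mem hw1 (hgm z hz)
  have hhne : ∀ z ∈ ball (0:ℂ) 1, h z ≠ 0 := by
    intro z hz hzero
    rw [hhdef] at hzero
    simp only [mob] at hzero
    rw [div_eq_zero_iff] at hzero
    rcases hzero with h1 | h2
    · exact hw ⟨z, hz, sub_eq_zero.mp h1⟩
    · exact den_ne hw1 (hgm z hz) h2
  -- derivative of h at 0
  have hgder : HasDerivAt g (deriv g 0) 0 :=
    (hgd.differentiableAt (isOpen_ball.mem_nhds h0ball)).hasDerivAt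
  have hmder := mob_hasDerivAt w (g 0) (den_ne hw1 (by rw [hg0]; simp))
  have hhder := hmder.comp 0 hgder
  have hval : (1 - (starRingEnd ℂ) w * w) / (1 - (starRingEnd ℂ) w * g 0) ^ 2 * deriv g 0
      = ((1 - normSq w : ℝ) : ℂ) * deriv g 0 := by
    rw [hg0, one_sub_conj_mul_self]
    norm_num
  rw [hval] at hhder
  have hhder' : HasDerivAt h (((1 - normSq w : ℝ) : ℂ) * deriv g 0) 0 := hhder
  have hh0 : h 0 = -w := by
    show mob w (g 0) = -w
    rw [hg0]
    simp [mob]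
  have hkey := lem4 h hhd hhm hhne
  rw [hhder'.deriv, hh0] at hkey
  rw [norm_mul, norm_neg] at hkey
  have hns : ‖((1 - normSq w : ℝ) : ℂ)‖ = 1 - ‖w‖ ^ 2 := by
    rw [Complex.norm_real, Real.norm_eq_abs, norm_sq_eq_normSq]
    rw [abs_of_pos]
    have := norm_sq_eq_normSq w
    nlinarith [hw1, norm_nonneg w]
  rw [hns] at hkey
  have hden : 0 < 1 - ‖w‖ ^ 2 := by nlinarith [norm_nonneg w]
  have hfinal : ‖deriv g 0‖ ≤ 2 * ‖w‖ * (-Real.log ‖w‖) / (1 - ‖w‖ ^ 2) := by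
    rw [le_div_iff₀ hden]
    nlinarith [hkey]
  have hCb := hC ‖w‖ ⟨norm_nonneg w, hwr.le⟩
  linarith


end AuxHelpers

/-- Lemma: if the hyperbolic derivative is not small, the image contains a large
hyperbolic disc. -/
theorem statement18 (M : ℝ) (hM : 0 < M) :
    ∃ ρ ∈ Ioo (0 : ℝ) 1, ∀ f : ℂ → ℂ,
      DifferentiableOn ℂ f (ball (0 : ℂ) 1) →
      (∀ z ∈ ball (0 : ℂ) 1, f z ∈ ball (0 : ℂ) 1) →
      (∀ D : ℝ, (∀ z ∈ ball (0 : ℂ) 1, hypDeriv f z ≤ D) → ρ ≤ D) →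
      ∃ a ∈ ball (0 : ℂ) 1,
        {z ∈ ball (0 : ℂ) 1 | hypDist z a < M} ⊆ f '' ball (0 : ℂ) 1 := by
  set E : ℝ := Real.exp (2 * M) with hEdef
  have hE1 : 1 < E := by
    rw [hEdef]
    have : 0 < 2 * M := by linarith
    calc (1:ℝ) = Real.exp 0 := by simp
    _ < Real.exp (2 * M) := Real.exp_lt_exp.mpr this
  set r : ℝ := (E - 1) / (E + 1) with hrdef
  have hEpos : 0 < E + 1 := by linarith
  have hr0 : 0 < r := by rw [hrdef]; exact div_pos (by linarith) hEpos
  have hr1 : r < 1 := by rw [hrdef, div_lt_one hEpos]; linarith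
  obtain ⟨C, hC0, hC1, hCb⟩ := exists_C hr0 hr1
  refine ⟨(1 + C) / 2, ⟨by linarith, by linarith⟩, ?_⟩
  intro f hfd hfm hsup
  -- find a point with large hyperbolic derivative
  have hz0 : ∃ z0 ∈ ball (0:ℂ) 1, C < hypDeriv f z0 := by
    by_contra hcon
    push_neg at hcon
    have := hsup C hcon
    linarith
  obtain ⟨z0, hz0b, hz0C⟩ := hz0
  have hz0n : ‖z0‖ < 1 := by simpa [mem_ball, dist_zero_right] using hz0b
  set b : ℂ := f z0 with hbdef
  have hbb : b ∈ ball (0:ℂ) 1 := hfm z0 hz0b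
  have hbn : ‖b‖ < 1 := by simpa [mem_ball, dist_zero_right] using hbb
  have hz0n' : ‖-z0‖ < 1 := by rwa [norm_neg]
  set g : ℂ → ℂ := fun z => mob b (f (mob (-z0) z)) with hgdef
  have hmemball : ∀ z : ℂ, ‖z‖ < 1 → z ∈ ball (0:ℂ) 1 := by
    intro z hz; simpa [mem_ball, dist_zero_right] using hz
  have hnormball : ∀ z : ℂ, z ∈ ball (0:ℂ) 1 → ‖z‖ < 1 := by
    intro z hz; simpa [mem_ball, dist_zero_right] using hz
  have hmz0 : ∀ z ∈ ball (0:ℂ) 1, mob (-z0) z ∈ ball (0:ℂ) 1 := fun z hz =>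
    hmemball _ (mob_mem hz0n' (hnormball z hz))
  have hfmz : ∀ z ∈ ball (0:ℂ) 1, f (mob (-z0) z) ∈ ball (0:ℂ) 1 := fun z hz =>
    hfm _ (hmz0 z hz)
  have hgd : DifferentiableOn ℂ g (ball (0:ℂ) 1) :=
    (mob_diffOn hbn).comp (hfd.comp (mob_diffOn hz0n') hmz0) hfmz
  have hgm : ∀ z ∈ ball (0:ℂ) 1, ‖g z‖ < 1 := fun z hz =>
    mob_mem hbn (hnormball _ (hfmz z hz))
  have hmz00 : mob (-z0) 0 = z0 := by simp [mob]
  have hg0 : g 0 = 0 := by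
    show mob b (f (mob (-z0) 0)) = 0
    rw [hmz00, ← hbdef]
    simp [mob]
  -- derivative of g at 0
  have h1 : HasDerivAt (mob (-z0))
      ((1 - (starRingEnd ℂ) (-z0) * (-z0)) / (1 - (starRingEnd ℂ) (-z0) * 0) ^ 2) 0 :=
    mob_hasDerivAt (-z0) 0 (by simp)
  have h1' : HasDerivAt (mob (-z0)) (1 - (starRingEnd ℂ) z0 * z0) 0 := by
    convert h1 using 1
    simp
  have h2 : HasDerivAt f (deriv f z0) z0 :=
    (hfd.differentiableAt (isOpen_ball.mem_nhds hz0b)).hasDerivAt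
  have h2' : HasDerivAt f (deriv f z0) (mob (-z0) 0) := by rwa [hmz00]
  have h12 := h2'.comp 0 h1'
  have h3 : HasDerivAt (mob b)
      ((1 - (starRingEnd ℂ) b * b) / (1 - (starRingEnd ℂ) b * b) ^ 2)
      (f (mob (-z0) 0)) := by
    rw [hmz00, ← hbdef]
    exact mob_hasDerivAt b b (den_ne hbn hbn)
  have hgder : HasDerivAt g
      ((1 - (starRingEnd ℂ) b * b) / (1 - (starRingEnd ℂ) b * b) ^ 2 *
        (deriv f z0 * (1 - (starRingEnd ℂ) z0 * z0))) 0 := by have := h3.comp 0 h12; exact this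
  -- norm computation
  have hb2 : 0 < 1 - ‖b‖ ^ 2 := by nlinarith [norm_nonneg b]
  have hz02 : 0 < 1 - ‖z0‖ ^ 2 := by nlinarith [norm_nonneg z0]
  have hnorm1 : ‖(1 : ℂ) - (starRingEnd ℂ) z0 * z0‖ = 1 - ‖z0‖ ^ 2 := by
    rw [one_sub_conj_mul_self, Complex.norm_real, Real.norm_eq_abs, norm_sq_eq_normSq,
      abs_of_pos (by rwa [← norm_sq_eq_normSq])]
  have hnormb : ‖(1 : ℂ) - (starRingEnd ℂ) b * b‖ = 1 - ‖b‖ ^ 2 := by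
    rw [one_sub_conj_mul_self, Complex.norm_real, Real.norm_eq_abs, norm_sq_eq_normSq,
      abs_of_pos (by rwa [← norm_sq_eq_normSq])]
  have hbne : (1 : ℂ) - (starRingEnd ℂ) b * b ≠ 0 := den_ne hbn hbn
  have hfrac : (1 - (starRingEnd ℂ) b * b) / (1 - (starRingEnd ℂ) b * b) ^ 2
      = ((1 : ℂ) - (starRingEnd ℂ) b * b)⁻¹ := by
    rw [sq, div_mul_cancel_left₀ hbne]
  have hgnorm : ‖deriv g 0‖ = hypDeriv f z0 := by
    rw [hgder.deriv, hfrac, norm_mul, norm_mul, norm_inv, hnormb, hnorm1, hypDeriv, hbdef]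
    field_simp
  have hgC : C < ‖deriv g 0‖ := by rwa [hgnorm]
  -- covering
  have hcov := lem_cover hr1 hCb g hgd hgm hg0 hgC
  refine ⟨b, hbb, ?_⟩
  rintro z ⟨hzb, hzM⟩
  have hzn : ‖z‖ < 1 := hnormball z hzb
  set w : ℂ := mob b z with hwdef
  have hwn : ‖w‖ < 1 := mob_mem hbn hzn
  have hwn0 : 0 ≤ ‖w‖ := norm_nonneg w
  -- hypDist z b < M gives ‖w‖ < r
  have hhd : hypDist z b = (1/2) * Real.log ((1 + ‖w‖) / (1 - ‖w‖)) := rfl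
  have hwr : ‖w‖ < r := by
    rw [hhd] at hzM
    have hX : (0:ℝ) < (1 + ‖w‖) / (1 - ‖w‖) := by
      apply div_pos <;> linarith
    have hlog : Real.log ((1 + ‖w‖) / (1 - ‖w‖)) < 2 * M := by linarith
    have hlog2 := Real.exp_lt_exp.mpr hlog
    rw [Real.exp_log hX] at hlog2
    rw [div_lt_iff₀ (by linarith : (0:ℝ) < 1 - ‖w‖), ← hEdef] at hlog2
    rw [hrdef, lt_div_iff₀ hEpos]
    nlinarith
  obtain ⟨u, hu, hgu⟩ := hcov w hwr
  set x : ℂ := mob (-z0) u with hxdef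
  have hxb : x ∈ ball (0:ℂ) 1 := hmz0 u hu
  have hfx : f x ∈ ball (0:ℂ) 1 := hfm x hxb
  have hfxn : ‖f x‖ < 1 := hnormball _ hfx
  -- g u = w means mob b (f x) = mob b z, hence f x = z
  have hkey : mob b (f x) = mob b z := hgu
  have e1 : mob (-b) (mob b (f x)) = f x := mob_inv hbn hfxn
  have e2 : mob (-b) (mob b z) = z := mob_inv hbn hzn
  rw [hkey, e2] at e1
  exact ⟨x, hxb, e1.symm⟩


end
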